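/- The segregated state ω_lm (all of Group A on platform m, all of Group B on platform ℓ) maximizes the potential over the four group-symmetric states {ω_ll, ω_lm, ω_ml, ω_mm} — i.e. is stochastically stable — if and only if C(N^A,2)·(2γ_A − 1) ≥ C(N^B,2)·(2γ_B − 1) and γ_B ≤ (N^A/(N^B − 1))·δ + 1/2. -/
import Mathlib


/-- C(n, 2) = n(n−1)/2, extended to real arguments. -/
noncomputable def C2 (n : ℝ) : ℝ := n * (n - 1) / 2

/-- Potential at the integrated state ω_ll (everyone on m). -/
noncomputable def potLL (NA NB γA γB : ℝ) : ℝ := C2 NA * γA + C2 NB * γB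

/-- Potential at the segregated state ω_lm (Group A on m, Group B on ℓ). -/
noncomputable def potLM (NA NB γA γB δ : ℝ) : ℝ :=
  C2 NA * γA + NA * NB * δ + C2 NB * (1 - γB)

/-- Potential at the segregated state ω_ml (Group A on ℓ, Group B on m). -/
noncomputable def potML (NA NB γA γB δ : ℝ) : ℝ :=
  C2 NA * (1 - γA) + NA * NB * δ + C2 NB * γB

/-- Potential at the integrated state ω_mm (everyone on ℓ). -/
noncomputable def potMM (NA NB γA γB : ℝ) : ℝ := C2 NA * (1 - γA) + C2 NB * (1 - γB)

/-- The segregated state ω_lm is stochastically stable (maximizes the potential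
over the four group-symmetric states) if and only if
C(N^A,2)·(2γ_A − 1) ≥ C(N^B,2)·(2γ_B − 1) and γ_B ≤ (N^A/(N^B − 1))·δ + 1/2. -/
theorem omega_lm_stochastically_stable_iff
    (NA NB : ℕ) (hNA : 2 ≤ NA) (hNB : 2 ≤ NB)
    (γA γB δ : ℝ) (hγA : γA ∈ Set.Ioo (1/2 : ℝ) 1) (hγB : γB ∈ Set.Ioo (1/2 : ℝ) 1)
    (hδ : 0 < δ) :
    (potLM NA NB γA γB δ ≥ potLL NA NB γA γB ∧
      potLM NA NB γA γB δ ≥ potML NA NB γA γB δ ∧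
      potLM NA NB γA γB δ ≥ potMM NA NB γA γB) ↔
    (C2 NA * (2 * γA - 1) ≥ C2 NB * (2 * γB - 1) ∧
      γB ≤ ((NA : ℝ) / ((NB : ℝ) - 1)) * δ + 1/2) := by
  obtain ⟨hA1, hA2⟩ := hγA
  obtain ⟨hB1, hB2⟩ := hγB
  have hNA' : (2:ℝ) ≤ NA := by exact_mod_cast hNA
  have hNB' : (2:ℝ) ≤ NB := by exact_mod_cast hNB
  have hNB1 : (0:ℝ) < (NB:ℝ) - 1 := by linarith
  have key : (γB ≤ ((NA : ℝ) / ((NB : ℝ) - 1)) * δ + 1/2) ↔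
      (γB - 1/2) * ((NB:ℝ) - 1) ≤ (NA:ℝ) * δ := by
    rw [div_mul_eq_mul_div, ← sub_le_iff_le_add, ← le_div_iff₀ hNB1]
  rw [key]
  simp only [potLM, potLL, potML, potMM, C2]
  constructor
  · rintro ⟨h1, h2, _⟩
    constructor
    · nlinarith
    · nlinarith
  · rintro ⟨h1, h2⟩
    refine ⟨?_, ?_, ?_⟩
    · nlinarith
    · nlinarith
    · have h3 : (0:ℝ) < (NA:ℝ) * (NB:ℝ) * δ :=
        mul_pos (mul_pos (by linarith) (by linarith)) hδ
      nlinarith [mul_nonneg (mul_nonneg (by linarith : (0:ℝ) ≤ (NA:ℝ))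
        (by linarith : (0:ℝ) ≤ (NA:ℝ) - 1)) (by linarith : (0:ℝ) ≤ 2 * γA - 1)]
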